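/- Let n be a positive natural number, A an n×n real matrix, and i, j indices. Then the function t ↦ det(A + t·E_{ij}), where E_{ij} is the matrix with a 1 in position (i,j) and 0 elsewhere, is differentiable at t = 0 with derivative equal to the (j,i) entry of the adjugate of A, i.e. ∂det(A)/∂A_{ij} = [adjᵀ(A)]_{ij} = adj(A)_{ji}. -/

import Mathlib

/-- The partial derivative of the determinant with respect to the single entry
`A i j` is the `(j, i)` entry of the adjugate: the function
`t ↦ det (A + t • E i j)` has derivative `adj(A) j i` at `t = 0`. -/
theorem deriv_det_entry_eq_adjugate
    (n : ℕ) (hn : 0 < n) (A : Matrix (Fin n) (Fin n) ℝ) (i j : Fin n) :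
    HasDerivAt (fun t : ℝ => (A + t • Matrix.single i j (1 : ℝ)).det)
      (Matrix.adjugate A j i) 0 := by
  have key : ∀ t : ℝ, (A + t • Matrix.single i j (1 : ℝ)).det
      = A.det + t * Matrix.adjugate A j i := by
    intro t
    have h1 : A + t • Matrix.single i j (1 : ℝ)
        = A.updateRow i (A i + t • (Pi.single j 1 : Fin n → ℝ)) := by
      ext k l
      by_cases hk : k = i
      · subst hk
        simp [Matrix.updateRow_self, Matrix.single, Pi.single_apply,
          eq_comm, mul_comm]
      · simp [Matrix.updateRow_ne hk, Matrix.single, Ne.symm hk]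
    rw [h1, Matrix.det_updateRow_add, Matrix.det_updateRow_smul,
      Matrix.updateRow_eq_self, Matrix.adjugate_apply]
  simp only [key]
  simpa [mul_comm] using ((hasDerivAt_id (0:ℝ)).const_mul (Matrix.adjugate A j i)).const_add A.det
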